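/- Let t ≥ 0 and let x₀ ∈ (0, 1] be the unique real number with x₀·e^{1−x₀} = e^{−t}. Then every complex number z with |z·e^{1−z}| = e^{−t} and |z| ≤ 1 satisfies |z| ≤ x₀, with equality exactly when z = x₀. -/

import Mathlib

lemma szego_f_strictMono : StrictMonoOn (fun x : ℝ => x * Real.exp (1 - x)) (Set.Icc 0 1) := by
  apply strictMonoOn_of_deriv_pos (convex_Icc 0 1)
  · exact (continuous_id.mul (Real.continuous_exp.comp (continuous_const.sub continuous_id))).continuousOn
  · intro x hx
    rw [interior_Icc] at hx
    have h : HasDerivAt (fun x : ℝ => x * Real.exp (1 - x))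
        (1 * Real.exp (1 - x) + x * (Real.exp (1 - x) * (0 - 1))) x := by
      exact (hasDerivAt_id x).mul
        ((Real.hasDerivAt_exp (1 - x)).comp x ((hasDerivAt_const x 1).sub (hasDerivAt_id x)))
    rw [h.deriv]
    have : (1 : ℝ) * Real.exp (1 - x) + x * (Real.exp (1 - x) * (0 - 1))
        = (1 - x) * Real.exp (1 - x) := by ring
    rw [this]
    exact mul_pos (by linarith [hx.2]) (Real.exp_pos _)

/-- On the deformed Szegő curve `γ_t`, the modulus `|z|` is maximized exactly at the
intersection point `x₀` of the curve with the positive real axis. -/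
theorem szego_curve_modulus_bound (t : ℝ) (ht : 0 ≤ t) (x₀ : ℝ)
    (hx : x₀ ∈ Set.Ioc (0 : ℝ) 1)
    (hx0 : x₀ * Real.exp (1 - x₀) = Real.exp (-t))
    (z : ℂ) (hcurve : ‖z * Complex.exp (1 - z)‖ = Real.exp (-t))
    (hz1 : ‖z‖ ≤ 1) :
    ‖z‖ ≤ x₀ ∧ (‖z‖ = x₀ ↔ z = (x₀ : ℂ)) := by
  set r := ‖z‖ with hr
  have hmod : r * Real.exp (1 - z.re) = Real.exp (-t) := by
    rw [norm_mul, Complex.norm_exp] at hcurve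
    simpa using hcurve
  have hr0 : 0 ≤ r := norm_nonneg z
  have hrpos : 0 < r := by
    by_contra h
    push_neg at h
    have : r = 0 := le_antisymm h hr0
    rw [this, zero_mul] at hmod
    exact absurd hmod.symm (ne_of_gt (Real.exp_pos _))
  have hre : z.re ≤ r := Complex.re_le_norm z
  have key : r * Real.exp (1 - r) ≤ Real.exp (-t) := by
    rw [← hmod]
    have := Real.exp_le_exp.mpr (by linarith : 1 - r ≤ 1 - z.re)
    nlinarith
  have hle : r ≤ x₀ := by
    by_contra h
    push_neg at h
    have := szego_f_strictMono ⟨le_of_lt hx.1, hx.2⟩ ⟨hr0, hz1⟩ h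
    simp only [] at this
    rw [hx0] at this
    linarith
  refine ⟨hle, ?_, ?_⟩
  · intro h
    have heq : r * Real.exp (1 - z.re) = r * Real.exp (1 - r) := by
      rw [hmod, ← hx0, h]
    have hexp : Real.exp (1 - z.re) = Real.exp (1 - r) :=
      mul_left_cancel₀ (ne_of_gt hrpos) heq
    have hrez : z.re = r := by
      have h2 : 1 - z.re = 1 - r := Real.exp_injective hexp
      linarith
    have him : z.im = 0 := by
      have hsq : z.re ^ 2 + z.im ^ 2 = r ^ 2 := by
        rw [hr, Complex.sq_norm, Complex.normSq_apply]
        ring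
      nlinarith [sq_nonneg z.im]
    have : z = (r : ℂ) := by
      apply Complex.ext
      · simpa using hrez
      · simpa using him
    rw [this, h]
  · intro h
    rw [hr, h, Complex.norm_real, Real.norm_eq_abs, abs_of_pos hx.1]
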